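/- arXiv:1703.03271 — 8 statements merged into one kernel-verified Lean document; each statement's English description precedes it below -/
import Mathlib

section
/- Let $x_{12},x_{13},x_{14},x_{23},x_{24},x_{34}$ be elements of a field such that the multi-ratio equation $\frac{(x_{12}-x_{24})(x_{13}-x_{23})(x_{14}-x_{34})}{(x_{12}-x_{23})(x_{14}-x_{24})(x_{13}-x_{34})}=1$ holds (with all denominators nonzero). Then the determinant of the $3\times 3$ matrix with rows $(x_{12}x_{34}, x_{12}+x_{34}, 1)$, $(x_{13}x_{24}, x_{13}+x_{24}, 1)$, $(x_{14}x_{23}, x_{14}+x_{23}, 1)$ vanishes. -/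
theorem stmt_0 {K : Type*} [Field K] (x12 x13 x14 x23 x24 x34 : K)
    (h1 : x12 - x23 ≠ 0) (h2 : x14 - x24 ≠ 0) (h3 : x13 - x34 ≠ 0)
    (hmr : (x12 - x24) * (x13 - x23) * (x14 - x34)
         = (x12 - x23) * (x14 - x24) * (x13 - x34)) :
    Matrix.det !![x12 * x34, x12 + x34, 1;
                  x13 * x24, x13 + x24, 1;
                  x14 * x23, x14 + x23, 1] = 0 := by
  have : Matrix.det !![x12 * x34, x12 + x34, 1;
                  x13 * x24, x13 + x24, 1;
                  x14 * x23, x14 + x23, 1] =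
      x12 * x34 * ((x13 + x24) * 1 - 1 * (x14 + x23))
      - (x12 + x34) * (x13 * x24 * 1 - 1 * (x14 * x23))
      + 1 * (x13 * x24 * (x14 + x23) - (x13 + x24) * (x14 * x23)) := by
    rw [Matrix.det_fin_three]; simp [Matrix.vecHead, Matrix.vecTail]; ring
  rw [this]
  linear_combination -hmr
end

section
/- Let $x_{12},x_{13},x_{14},x_{23},x_{24},x_{34}$ be elements of a field with $(x_{12}-x_{23})(x_{14}-x_{24})(x_{13}-x_{34})\neq 0$. Then the three quadratic polynomials $(X-x_{12})(X-x_{34})$, $(X-x_{13})(X-x_{24})$, $(X-x_{14})(X-x_{23})$ are linearly dependent over the field if and only if $(x_{12}-x_{24})(x_{13}-x_{23})(x_{14}-x_{34}) = (x_{12}-x_{23})(x_{14}-x_{24})(x_{13}-x_{34})$. -/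
open Polynomial in
theorem stmt_1 {K : Type*} [Field K] (x12 x13 x14 x23 x24 x34 : K)
    (hden : (x12 - x23) * (x14 - x24) * (x13 - x34) ≠ 0) :
    (∃ a b c : K, ¬(a = 0 ∧ b = 0 ∧ c = 0) ∧
        C a * ((X - C x12) * (X - C x34))
      + C b * ((X - C x13) * (X - C x24))
      + C c * ((X - C x14) * (X - C x23)) = 0)
    ↔ (x12 - x24) * (x13 - x23) * (x14 - x34)
      = (x12 - x23) * (x14 - x24) * (x13 - x34) := by
  constructor
  · rintro ⟨a, b, c, hne, h⟩
    have h' : (C (a+b+c)) * X^2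
        + C (-(a*(x12+x34)+b*(x13+x24)+c*(x14+x23))) * X
        + C (a*(x12*x34)+b*(x13*x24)+c*(x14*x23)) = 0 := by
      rw [← h]; simp only [map_add, map_mul, map_neg]; ring
    have e2 := congrArg (fun p => coeff p 2) h'
    have e1 := congrArg (fun p => coeff p 1) h'
    have e0 := congrArg (fun p => coeff p 0) h'
    simp [add_mul, coeff_add, coeff_C_mul, coeff_X_pow, coeff_C, coeff_X] at e2 e1 e0
    by_contra hcond
    have hdet : (x12 - x24) * (x13 - x23) * (x14 - x34)
        - (x12 - x23) * (x14 - x24) * (x13 - x34) ≠ 0 := sub_ne_zero.mpr hcond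
    have ha : a = 0 := by
      have h1 : ((x12 - x24) * (x13 - x23) * (x14 - x34)
          - (x12 - x23) * (x14 - x24) * (x13 - x34)) * a = 0 := by
        linear_combination ((x13+x24)*(x14*x23) - (x14+x23)*(x13*x24)) * e2
          + ((x14*x23) - (x13*x24)) * e1 + ((x14+x23) - (x13+x24)) * e0
      exact (mul_eq_zero.mp h1).resolve_left hdet
    have hb : b = 0 := by
      have h1 : ((x12 - x24) * (x13 - x23) * (x14 - x34)
          - (x12 - x23) * (x14 - x24) * (x13 - x34)) * b = 0 := by
        linear_combination ((x14+x23)*(x12*x34) - (x12+x34)*(x14*x23)) * e2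
          + ((x12*x34) - (x14*x23)) * e1 + ((x12+x34) - (x14+x23)) * e0
      exact (mul_eq_zero.mp h1).resolve_left hdet
    have hc : c = 0 := by
      have h1 : ((x12 - x24) * (x13 - x23) * (x14 - x34)
          - (x12 - x23) * (x14 - x24) * (x13 - x34)) * c = 0 := by
        linear_combination ((x12+x34)*(x13*x24) - (x13+x24)*(x12*x34)) * e2
          + ((x13*x24) - (x12*x34)) * e1 + ((x13+x24) - (x12+x34)) * e0
      exact (mul_eq_zero.mp h1).resolve_left hdet
    exact hne ⟨ha, hb, hc⟩
  · intro hcond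
    by_cases hs : x12 + x34 = x13 + x24 ∧ x13 + x24 = x14 + x23
    · by_cases hp : x12 * x34 = x13 * x24 ∧ x13 * x24 = x14 * x23
      · refine ⟨1, -1, 0, by simp, ?_⟩
        have h1 : C x12 + C x34 = C x13 + C x24 := by
          rw [← map_add, ← map_add, hs.1]
        have h2 : C x12 * C x34 = C x13 * C x24 := by
          rw [← map_mul, ← map_mul, hp.1]
        simp only [map_one, map_neg, map_zero]
        linear_combination (-X) * h1 + h2
      · refine ⟨x13 * x24 - x14 * x23, x14 * x23 - x12 * x34, x12 * x34 - x13 * x24, ?_, ?_⟩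
        · rintro ⟨ha, hb, hc⟩
          exact hp ⟨sub_eq_zero.mp hc, sub_eq_zero.mp ha⟩
        · have key : (x13 * x24 - x14 * x23) * (x12 + x34)
              + (x14 * x23 - x12 * x34) * (x13 + x24)
              + (x12 * x34 - x13 * x24) * (x14 + x23) = 0 := by
            linear_combination hcond
          have keyC := congrArg (C : K →+* K[X]) key
          simp only [map_add, map_mul, map_sub, map_zero] at keyC
          simp only [map_add, map_mul, map_sub] 
          linear_combination (-X) * keyC
    · refine ⟨x13 + x24 - (x14 + x23), x14 + x23 - (x12 + x34), x12 + x34 - (x13 + x24), ?_, ?_⟩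
      · rintro ⟨ha, hb, hc⟩
        exact hs ⟨sub_eq_zero.mp hc, sub_eq_zero.mp ha⟩
      · have key : (x13 + x24 - (x14 + x23)) * (x12 * x34)
            + (x14 + x23 - (x12 + x34)) * (x13 * x24)
            + (x12 + x34 - (x13 + x24)) * (x14 * x23) = 0 := by
          linear_combination -hcond
        have keyC := congrArg (C : K →+* K[X]) key
        simp only [map_add, map_mul, map_sub, map_zero] at keyC
        simp only [map_add, map_mul, map_sub]
        linear_combination keyC
end

section
/- The map $r_0$ defined by sending $(y_0, y_{00}, y_{m0}, y_{0n}, y_{mn})$ to $(y_{00}, y_0, y_{m0}, y_{0n}, \bar{y}_{mn})$, where $\bar{y}_{mn}$ is determined by the multi-ratio equation $(y_0-y_{m0})(y_{0n}-y_{mn})(y_{00}-\bar{y}_{mn}) = (y_0-y_{mn})(y_{00}-y_{m0})(y_{0n}-\bar{y}_{mn})$, is an involution: applying it twice returns the original values (on the open set where both applications are defined). -/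
/-- The action `r₀` (swap `y₀ ↔ y₀₀` and update `yₘₙ` by the multi-ratio
equation) is an involution on the open set where both applications are
defined. -/
theorem stmt_4 {K : Type*} [Field K] (y0 y00 ym0 y0n ymn z w : K)
    (hnd1 : (y0 - ym0) * (y0n - ymn) ≠ (y0 - ymn) * (y00 - ym0))
    (hz : (y0 - ym0) * (y0n - ymn) * (y00 - z)
        = (y0 - ymn) * (y00 - ym0) * (y0n - z))
    (hnd2 : (y00 - ym0) * (y0n - z) ≠ (y00 - z) * (y0 - ym0))
    (hw : (y00 - ym0) * (y0n - z) * (y0 - w)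
        = (y00 - z) * (y0 - ym0) * (y0n - w)) :
    w = ymn := by
  have hA : (y00 - ym0) * (y0n - z) - (y00 - z) * (y0 - ym0) ≠ 0 :=
    sub_ne_zero.mpr hnd2
  have key : ((y00 - ym0) * (y0n - z) - (y00 - z) * (y0 - ym0)) * (w - ymn) = 0 := by
    linear_combination -hw - hz
  rcases mul_eq_zero.mp key with h | h
  · exact absurd h hA
  · exact sub_eq_zero.mp h
end

section
/- Suppose $y_{mn} = y_{m0} + y_{0n} - y_{00}$ for a $2\times 2$ block, i.e. $y_{11}=y_{10}+y_{01}-y_{00}$. Then the value $\bar{y}_{11}$ determined by the six-point multi-ratio equation on $\{y_0,\bar{y}_{11}\},\{y_{01},y_{10}\},\{y_{00},y_{11}\}$ equals $y_{10}+y_{01}-y_0$. (That is, the additive-group solution $y_{mn}=y_{00}^{-1}*y_{m0}*y_{0n}$ with $*$ being field addition is preserved by the action $r_0$, which swaps $y_0$ and $y_{00}$.) -/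
/-- The additive-group solution `y₁₁ = y₁₀ + y₀₁ - y₀₀` is preserved by the
action `r₀`: the updated value is `ȳ₁₁ = y₁₀ + y₀₁ - y₀`. -/
theorem stmt_5 {K : Type*} [Field K] (y0 y00 y10 y01 y11 z : K)
    (h11 : y11 = y10 + y01 - y00)
    (hnd : (y0 - y10) * (y01 - y11) ≠ (y0 - y11) * (y00 - y10))
    (hz : (y0 - y10) * (y01 - y11) * (y00 - z)
        = (y0 - y11) * (y00 - y10) * (y01 - z)) :
    z = y10 + y01 - y0 := by
  subst h11
  have key : ((y0 - y10) * (y01 - (y10 + y01 - y00)) - (y0 - (y10 + y01 - y00)) * (y00 - y10)) * (z - (y10 + y01 - y0)) = 0 := by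
    linear_combination -hz
  rcases mul_eq_zero.mp key with h | h
  · exact absurd (sub_eq_zero.mp h) hnd
  · exact sub_eq_zero.mp h
end

section
/- Suppose $y_{11} = y_{00}^{-1} y_{10} y_{01}$ with $y_{00}\neq 0$ (multiplicative group solution). Then the value $\bar{y}_{11}$ determined by the six-point multi-ratio equation $(y_0-y_{10})(y_{01}-y_{11})(y_{00}-\bar{y}_{11}) = (y_0-y_{11})(y_{00}-y_{10})(y_{01}-\bar{y}_{11})$ equals $y_0^{-1} y_{10} y_{01}$, provided $y_0\neq 0$ and the relevant nondegeneracy conditions hold. -/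
/-- The multiplicative-group solution `y₁₁ = y₀₀⁻¹ y₁₀ y₀₁` is preserved by the
action `r₀`: the updated value is `ȳ₁₁ = y₀⁻¹ y₁₀ y₀₁`. -/
theorem stmt_6 {K : Type*} [Field K] (y0 y00 y10 y01 y11 z : K)
    (hy0 : y0 ≠ 0) (hy00 : y00 ≠ 0)
    (h11 : y11 = y00⁻¹ * y10 * y01)
    (hnd : (y0 - y10) * (y01 - y11) ≠ (y0 - y11) * (y00 - y10))
    (hz : (y0 - y10) * (y01 - y11) * (y00 - z)
        = (y0 - y11) * (y00 - y10) * (y01 - z)) :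
    z = y0⁻¹ * y10 * y01 := by
  subst h11
  have hd : (y0 - y10) * (y01 - y00⁻¹ * y10 * y01) - (y0 - y00⁻¹ * y10 * y01) * (y00 - y10) ≠ 0 :=
    sub_ne_zero.mpr hnd
  have key : ((y0 - y10) * (y01 - y00⁻¹ * y10 * y01) - (y0 - y00⁻¹ * y10 * y01) * (y00 - y10)) * z
      = ((y0 - y10) * (y01 - y00⁻¹ * y10 * y01) - (y0 - y00⁻¹ * y10 * y01) * (y00 - y10)) *
        (y0⁻¹ * y10 * y01) := by
    field_simp at hz ⊢
    ring_nf at hz ⊢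
    linear_combination (-y0) * hz
  exact mul_left_cancel₀ hd key
end

section
/- In the case $k=0$ of Coble's group, the generator $r_0$ (swapping $y_0$ and $y_{00}$ and updating each $y_{mn}$ by the multi-ratio equation) and the generator $t_1$ (swapping column 0 and column 1 of the $y$-array) satisfy the braid relation: $(r_0 t_1)^3 = \mathrm{id}$ on the field of rational functions in the variables, for the minimal case $i=1$, $j=1$ of a $2\times 2$ array together with $y_0$. -/
/-- State: `(y₀, y₀₀, y₁₀, y₀₁, y₁₁)`. -/
abbrev CobleState (K : Type*) := K × K × K × K × K

/-- Denominator (leading coefficient) of the multi-ratio equation, linear in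
the unknown `ȳ₁₁`. -/
def mrDen {K : Type*} [Field K] (s : CobleState K) : K :=
  match s with
  | (y0, y00, y10, y01, y11) =>
      (y0 - y11) * (y00 - y10) - (y0 - y10) * (y01 - y11)

/-- The unique solution `ȳ₁₁` of
`(y₀-y₁₀)(y₀₁-y₁₁)(y₀₀-z) = (y₀-y₁₁)(y₀₀-y₁₀)(y₀₁-z)`. -/
def mrBar {K : Type*} [Field K] (s : CobleState K) : K :=
  match s with
  | (y0, y00, y10, y01, y11) =>
      ((y0 - y11) * (y00 - y10) * y01 - (y0 - y10) * (y01 - y11) * y00) /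
        mrDen (y0, y00, y10, y01, y11)

/-- The generator `r₀`: swap `y₀ ↔ y₀₀` and update `y₁₁` by the multi-ratio
equation. -/
def cobleR0 {K : Type*} [Field K] (s : CobleState K) : CobleState K :=
  match s with
  | (y0, y00, y10, y01, y11) => (y00, y0, y10, y01, mrBar (y0, y00, y10, y01, y11))

/-- The generator `t₁`: swap column 0 and column 1 of the array, i.e.
`y₀₀ ↔ y₁₀` and `y₀₁ ↔ y₁₁`. -/
def cobleT1 {K : Type*} [Field K] (s : CobleState K) : CobleState K :=
  match s with
  | (y0, y00, y10, y01, y11) => (y0, y10, y00, y11, y01)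

/-- The braid relation `(r₀ t₁)³ = id` in the case `k = 0`, `i = j = 1`,
on the open set where each application of `r₀` is defined. -/
theorem stmt_11 {K : Type*} [Field K] (s : CobleState K)
    (h1 : mrDen (cobleT1 s) ≠ 0)
    (h2 : mrDen (cobleT1 (cobleR0 (cobleT1 s))) ≠ 0)
    (h3 : mrDen (cobleT1 (cobleR0 (cobleT1 (cobleR0 (cobleT1 s))))) ≠ 0) :
    cobleR0 (cobleT1 (cobleR0 (cobleT1 (cobleR0 (cobleT1 s))))) = s := by
  obtain ⟨a, b, c, d, e⟩ := s
  simp only [cobleR0, cobleT1, mrBar, mrDen] at *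
  set D1 := (a - d) * (c - b) - (a - b) * (e - d) with hD1
  set N1 := (a - d) * (c - b) * e - (a - b) * (e - d) * c with hN1
  set B1 := N1 / D1 with hB1
  set D2 := (c - e) * (b - a) - (c - a) * (B1 - e) with hD2
  set B2 := ((c - e) * (b - a) * B1 - (c - a) * (B1 - e) * b) / D2 with hB2
  set D3 := (b - B1) * (a - c) - (b - c) * (B2 - B1) with hD3
  have key4 : B2 = d := by
    rw [hB2, div_eq_iff h2, hD2, hB1]
    field_simp
    rw [hN1, hD1]
    ring
  have key5 : ((b - B1) * (a - c) * B2 - (b - c) * (B2 - B1) * a) / D3 = e := by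
    rw [div_eq_iff h3, hD3, key4, hB1]
    field_simp
    rw [hN1, hD1]
    ring
  simp only [Prod.mk.injEq, true_and, and_true, eq_self_iff_true]
  exact ⟨key4, key5⟩
end

section
/- In the case $k=0$, $i=j=1$ of Coble's group, the generators $r_0$ and $s_1$ (swapping row 0 and row 1 of the $y$-array) satisfy $(r_0 s_1)^3 = \mathrm{id}$ generically. -/
/-- The generator `s₁`: swap row 0 and row 1 of the array, i.e.
`y₀₀ ↔ y₀₁` and `y₁₀ ↔ y₁₁`. -/
def cobleS1 {K : Type*} [Field K] (s : CobleState K) : CobleState K :=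
  match s with
  | (y0, y00, y10, y01, y11) => (y0, y01, y11, y00, y10)

/-- `mrBar` satisfies the multi-ratio equation when the denominator is nonzero. -/
lemma mrBar_sat {K : Type*} [Field K] (y0 y00 y10 y01 y11 : K)
    (h : mrDen (y0, y00, y10, y01, y11) ≠ 0) :
    (y0 - y10) * (y01 - y11) * (y00 - mrBar (y0, y00, y10, y01, y11)) =
      (y0 - y11) * (y00 - y10) * (y01 - mrBar (y0, y00, y10, y01, y11)) := by
  simp only [mrBar, mrDen] at h ⊢
  field_simp
  ring

/-- Uniqueness: any solution of the multi-ratio equation equals `mrBar`. -/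
lemma mrBar_uniq {K : Type*} [Field K] (y0 y00 y10 y01 y11 z : K)
    (h : mrDen (y0, y00, y10, y01, y11) ≠ 0)
    (hz : (y0 - y10) * (y01 - y11) * (y00 - z) =
      (y0 - y11) * (y00 - y10) * (y01 - z)) :
    z = mrBar (y0, y00, y10, y01, y11) := by
  simp only [mrBar, mrDen] at h ⊢
  rw [eq_div_iff h]
  linear_combination hz

/-- The braid relation `(r₀ s₁)³ = id` in the case `k = 0`, `i = j = 1`,
on the open set where each application of `r₀` is defined. -/
theorem stmt_12 {K : Type*} [Field K] (s : CobleState K)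
    (h1 : mrDen (cobleS1 s) ≠ 0)
    (h2 : mrDen (cobleS1 (cobleR0 (cobleS1 s))) ≠ 0)
    (h3 : mrDen (cobleS1 (cobleR0 (cobleS1 (cobleR0 (cobleS1 s))))) ≠ 0) :
    cobleR0 (cobleS1 (cobleR0 (cobleS1 (cobleR0 (cobleS1 s))))) = s := by
  obtain ⟨a, b, c, d, e⟩ := s
  simp only [cobleS1, cobleR0] at h1 h2 h3 ⊢
  set B1 := mrBar (a, d, e, b, c) with hB1
  -- B1 satisfies its defining equation
  have eq1 : (a - e) * (b - c) * (d - B1) = (a - c) * (d - e) * (b - B1) :=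
    mrBar_sat a d e b c h1
  -- second application returns c
  have hB2 : mrBar (d, b, B1, a, e) = c := by
    refine (mrBar_uniq d b B1 a e c h2 ?_).symm
    linear_combination eq1
  rw [hB2] at h3 ⊢
  -- third application returns e
  have hB3 : mrBar (b, a, c, d, B1) = e := by
    refine (mrBar_uniq b a c d B1 e h3 ?_).symm
    linear_combination eq1
  rw [hB3]
end

section
/- Let $l_1,l_2,l_3,l_4$ be four lines in affine space $K^M$ over a field $K$, pairwise intersecting in six distinct points $x_{12}=l_1\cap l_2$, $x_{13}=l_1\cap l_3$, $x_{14}=l_1\cap l_4$, $x_{23}=l_2\cap l_3$, $x_{24}=l_2\cap l_4$, $x_{34}=l_3\cap l_4$. Then for each coordinate $\alpha\in\{1,\dots,M\}$, the coordinates satisfy $(x^{(\alpha)}_{12}-x^{(\alpha)}_{24})(x^{(\alpha)}_{13}-x^{(\alpha)}_{23})(x^{(\alpha)}_{14}-x^{(\alpha)}_{34}) = (x^{(\alpha)}_{12}-x^{(\alpha)}_{23})(x^{(\alpha)}_{14}-x^{(\alpha)}_{24})(x^{(\alpha)}_{13}-x^{(\alpha)}_{34})$. -/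
/-- The line through `p` with direction `v` in affine space `K^M`. -/
def affLine {K : Type*} [Field K] {M : ℕ} (p v : Fin M → K) :
    Set (Fin M → K) :=
  {x | ∃ t : K, x = p + t • v}

private lemma coord_eq {K : Type*} [Field K] {M : ℕ} {p v x : Fin M → K} {r : K}
    (h : x = p + r • v) (β : Fin M) : x β = p β + r * v β := by
  rw [h]; simp [Pi.add_apply, Pi.smul_apply, smul_eq_mul]

/-- Four lines in `K^M` pairwise intersecting in six distinct points (a
complete quadrilateral) satisfy, in each coordinate, the multi-ratio
equation. -/
theorem stmt_17 {K : Type*} [Field K] {M : ℕ}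
    (l1 l2 l3 l4 : Set (Fin M → K))
    (hl1 : ∃ p v, v ≠ 0 ∧ l1 = affLine p v)
    (hl2 : ∃ p v, v ≠ 0 ∧ l2 = affLine p v)
    (hl3 : ∃ p v, v ≠ 0 ∧ l3 = affLine p v)
    (hl4 : ∃ p v, v ≠ 0 ∧ l4 = affLine p v)
    (x12 x13 x14 x23 x24 x34 : Fin M → K)
    (h12 : l1 ∩ l2 = {x12}) (h13 : l1 ∩ l3 = {x13}) (h14 : l1 ∩ l4 = {x14})
    (h23 : l2 ∩ l3 = {x23}) (h24 : l2 ∩ l4 = {x24}) (h34 : l3 ∩ l4 = {x34})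
    (hdist : [x12, x13, x14, x23, x24, x34].Pairwise (· ≠ ·)) :
    ∀ α : Fin M,
      (x12 α - x24 α) * (x13 α - x23 α) * (x14 α - x34 α)
        = (x12 α - x23 α) * (x14 α - x24 α) * (x13 α - x34 α) := by
  obtain ⟨p1, v1, hv1, rfl⟩ := hl1
  obtain ⟨p2, v2, hv2, rfl⟩ := hl2
  obtain ⟨p3, v3, hv3, rfl⟩ := hl3
  obtain ⟨p4, v4, hv4, rfl⟩ := hl4
  have hne : x12 ≠ x13 := by
    simp only [List.pairwise_cons, List.mem_cons, List.not_mem_nil] at hdist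
    exact hdist.1 x13 (by simp)
  have m12 : x12 ∈ affLine p1 v1 ∩ affLine p2 v2 := by rw [h12]; exact rfl
  have m13 : x13 ∈ affLine p1 v1 ∩ affLine p3 v3 := by rw [h13]; exact rfl
  have m14 : x14 ∈ affLine p1 v1 ∩ affLine p4 v4 := by rw [h14]; exact rfl
  have m23 : x23 ∈ affLine p2 v2 ∩ affLine p3 v3 := by rw [h23]; exact rfl
  have m24 : x24 ∈ affLine p2 v2 ∩ affLine p4 v4 := by rw [h24]; exact rfl
  have m34 : x34 ∈ affLine p3 v3 ∩ affLine p4 v4 := by rw [h34]; exact rfl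
  obtain ⟨r12, hr12⟩ := m12.1
  obtain ⟨s12, hs12⟩ := m12.2
  obtain ⟨r13, hr13⟩ := m13.1
  obtain ⟨q13, hq13⟩ := m13.2
  obtain ⟨r14, hr14⟩ := m14.1
  obtain ⟨w14, hw14⟩ := m14.2
  obtain ⟨s23, hs23⟩ := m23.1
  obtain ⟨q23, hq23⟩ := m23.2
  obtain ⟨s24, hs24⟩ := m24.1
  obtain ⟨w24, hw24⟩ := m24.2
  obtain ⟨q34, hq34⟩ := m34.1
  obtain ⟨w34, hw34⟩ := m34.2
  set a1 : K := r13 - r12 with ha1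
  set b1 : K := r14 - r12 with hb1
  set a2 : K := s23 - s12 with ha2
  set b2 : K := s24 - s12 with hb2
  set a3 : K := q23 - q13 with ha3
  set b3 : K := q34 - q13 with hb3
  set c : K := w24 - w14 with hc
  set d : K := w34 - w14 with hd
  -- per-coordinate difference relations
  have E13 : ∀ β, x13 β = x12 β + a1 * v1 β := fun β => by
    have h := coord_eq hr13 β; have h' := coord_eq hr12 β
    rw [ha1]; linear_combination h - h'
  have E14 : ∀ β, x14 β = x12 β + b1 * v1 β := fun β => by
    have h := coord_eq hr14 β; have h' := coord_eq hr12 β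
    rw [hb1]; linear_combination h - h'
  have E23 : ∀ β, x23 β = x12 β + a2 * v2 β := fun β => by
    have h := coord_eq hs23 β; have h' := coord_eq hs12 β
    rw [ha2]; linear_combination h - h'
  have E24 : ∀ β, x24 β = x12 β + b2 * v2 β := fun β => by
    have h := coord_eq hs24 β; have h' := coord_eq hs12 β
    rw [hb2]; linear_combination h - h'
  have E23' : ∀ β, x23 β = x13 β + a3 * v3 β := fun β => by
    have h := coord_eq hq23 β; have h' := coord_eq hq13 β
    rw [ha3]; linear_combination h - h'
  have E34 : ∀ β, x34 β = x13 β + b3 * v3 β := fun β => by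
    have h := coord_eq hq34 β; have h' := coord_eq hq13 β
    rw [hb3]; linear_combination h - h'
  have E24' : ∀ β, x24 β = x14 β + c * v4 β := fun β => by
    have h := coord_eq hw24 β; have h' := coord_eq hw14 β
    rw [hc]; linear_combination h - h'
  have E34' : ∀ β, x34 β = x14 β + d * v4 β := fun β => by
    have h := coord_eq hw34 β; have h' := coord_eq hw14 β
    rw [hd]; linear_combination h - h'
  -- elimination relations
  have R1 : ∀ β, a3 * v3 β = a2 * v2 β - a1 * v1 β := fun β => by
    linear_combination E23 β - E23' β - E13 β
  have R2 : ∀ β, c * v4 β = b2 * v2 β - b1 * v1 β := fun β => by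
    linear_combination E24 β - E24' β - E14 β
  have R3 : ∀ β, d * v4 β = b3 * v3 β + (a1 - b1) * v1 β := fun β => by
    linear_combination E34 β - E34' β + E13 β - E14 β
  -- the key linear relation between v1 and v2
  set k2 : K := a3 * d * b2 - c * b3 * a2 with hk2def
  set k1 : K := a3 * c * (a1 - b1) - c * b3 * a1 + a3 * d * b1 with hk1def
  have hkey : ∀ β, k2 * v2 β = k1 * v1 β := fun β => by
    rw [hk2def, hk1def]
    linear_combination (a3 * c) * R3 β - (a3 * d) * R2 β + (c * b3) * R1 β
  -- k2 must vanish, otherwise lines 1 and 2 would coincide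
  have hk2 : k2 = 0 := by
    by_contra hk2ne
    have hk1ne : k1 ≠ 0 := by
      intro h0
      apply hv2
      funext β
      have h := hkey β
      rw [h0, zero_mul] at h
      have h' : v2 β = 0 := (mul_eq_zero.mp h).resolve_left hk2ne
      simp [h']
    have hv1v2 : ∀ β, v1 β = (k2 / k1) * v2 β := fun β => by
      rw [div_mul_eq_mul_div, eq_div_iff hk1ne]
      linear_combination -(hkey β)
    have hx13l2 : x13 ∈ affLine p2 v2 := by
      refine ⟨s12 + a1 * (k2 / k1), ?_⟩
      funext β
      have h1 := E13 β
      have h2 := coord_eq hs12 β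
      have h3 := hv1v2 β
      simp only [Pi.add_apply, Pi.smul_apply, smul_eq_mul]
      rw [h1, h2, h3]; ring
    have hx13l1 : x13 ∈ affLine p1 v1 := ⟨r13, hr13⟩
    have : x13 ∈ ({x12} : Set (Fin M → K)) := by
      rw [← h12]; exact ⟨hx13l1, hx13l2⟩
    exact hne (this.symm)
  -- finish coordinatewise
  intro α
  have D1 : x12 α - x24 α = -(b2 * v2 α) := by linear_combination -E24 α
  have D2 : x13 α - x23 α = -(a3 * v3 α) := by linear_combination -E23' α
  have D3 : x14 α - x34 α = -(d * v4 α) := by linear_combination -E34' α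
  have D4 : x12 α - x23 α = -(a2 * v2 α) := by linear_combination -E23 α
  have D5 : x14 α - x24 α = -(c * v4 α) := by linear_combination -E24' α
  have D6 : x13 α - x34 α = -(b3 * v3 α) := by linear_combination -E34 α
  rw [D1, D2, D3, D4, D5, D6]
  have hk2' : a3 * d * b2 - c * b3 * a2 = 0 := by rw [← hk2def]; exact hk2
  linear_combination (-(v2 α * v3 α * v4 α)) * hk2'
end
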